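/- Let f ∈ ℂ[z₁,…,z_n] be stable, j ∈ {1,…,n}, and α ∈ ℂ with Im(α) ≥ 0. Then the polynomial in the remaining n−1 variables obtained by substituting z_j = α into f is either identically zero or stable. -/

import Mathlib

open Polynomial in
lemma stmt7_multiset_aux (R : Multiset ℂ) (h : ∀ r ∈ R, 2 ≤ ‖r‖) :
    (R.map (fun a => ‖1 - a‖)).prod ≤
      (3/2) ^ (Multiset.card R) * (R.map (fun a => ‖a‖)).prod := by
  induction R using Multiset.induction with
  | empty => simp
  | cons a s ih =>
    have ha : 2 ≤ ‖a‖ := h a (Multiset.mem_cons_self a s)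
    have hs : ∀ r ∈ s, 2 ≤ ‖r‖ := fun r hr => h r (Multiset.mem_cons_of_mem hr)
    have ih' := ih hs
    simp only [Multiset.map_cons, Multiset.prod_cons, Multiset.card_cons, pow_succ]
    have h1 : ‖1 - a‖ ≤ 3/2 * ‖a‖ := by
      have := norm_sub_le (1:ℂ) a
      simp only [norm_one] at this
      nlinarith
    have hP : (0:ℝ) ≤ (Multiset.map (fun a => ‖1 - a‖) s).prod := by
      apply Multiset.prod_nonneg
      intro x hx
      obtain ⟨r, _, rfl⟩ := Multiset.mem_map.mp hx
      exact norm_nonneg _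
    have hQ : (0:ℝ) ≤ (Multiset.map (fun a => ‖a‖) s).prod := by
      apply Multiset.prod_nonneg
      intro x hx
      obtain ⟨r, _, rfl⟩ := Multiset.mem_map.mp hx
      exact norm_nonneg _
    calc ‖1 - a‖ * (Multiset.map (fun a => ‖1 - a‖) s).prod
        ≤ (3/2 * ‖a‖) * ((3/2) ^ Multiset.card s * (Multiset.map (fun a => ‖a‖) s).prod) := by
          apply mul_le_mul h1 ih' hP
          positivity
      _ = (3/2) ^ Multiset.card s * (3/2) * (‖a‖ * (Multiset.map (fun a => ‖a‖) s).prod) := by ring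


lemma stmt7_mvaeval_eq_eval {n : ℕ} (v : Fin n → ℂ) (f : MvPolynomial (Fin n) ℂ) :
    MvPolynomial.aeval v f = MvPolynomial.eval v f := by
  rw [MvPolynomial.aeval_def, Algebra.algebraMap_self]
  rfl

lemma stmt7_plumb {n : ℕ} {A : Type*} [CommSemiring A] [Algebra ℂ A]
    (φ : A →ₐ[ℂ] ℂ) (σ : Fin n → A) (f : MvPolynomial (Fin n) ℂ) :
    φ (MvPolynomial.aeval σ f) = MvPolynomial.eval (fun i => φ (σ i)) f := by
  rw [MvPolynomial.comp_aeval_apply, stmt7_mvaeval_eq_eval]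



open Polynomial in
lemma stmt7_key (D : ℕ) (p : Polynomial ℂ) (hD : p.natDegree ≤ D)
    (hr : ∀ r : ℂ, p.IsRoot r → 2 ≤ ‖r‖) :
    ‖p.eval 1‖ ≤ (3/2) ^ D * ‖p.eval 0‖ := by
  rcases eq_or_ne p 0 with rfl | hp
  · simp
  have hsp := Polynomial.Splits.eq_prod_roots (IsAlgClosed.splits p)
  have hev : ∀ x : ℂ, p.eval x = p.leadingCoeff * (p.roots.map (fun a => x - a)).prod := by
    intro x
    conv_lhs => rw [hsp]
    simp [eval_multiset_prod, Multiset.map_map, Function.comp]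
  have habs : ∀ x : ℂ, ‖p.eval x‖
      = ‖p.leadingCoeff‖ * (p.roots.map (fun a => ‖x - a‖)).prod := by
    intro x
    rw [hev x, norm_mul]
    congr 1
    rw [show (Multiset.map (fun a => ‖x - a‖) p.roots)
        = Multiset.map (fun z => ‖z‖) (Multiset.map (fun a => x - a) p.roots) by
      rw [Multiset.map_map]; rfl]
    exact map_multiset_prod (normHom (α := ℂ)) _
  have hroots2 : ∀ r ∈ p.roots, 2 ≤ ‖r‖ := fun r hrr => hr r (isRoot_of_mem_roots hrr)
  have hmain := stmt7_multiset_aux p.roots hroots2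
  have hcard : Multiset.card p.roots ≤ D := le_trans (card_roots' p) hD
  have hpow : ((3:ℝ)/2) ^ Multiset.card p.roots ≤ (3/2) ^ D := by
    apply pow_le_pow_right₀ (by norm_num) hcard
  have hQ : (0:ℝ) ≤ (p.roots.map (fun a => ‖a‖)).prod := by
    apply Multiset.prod_nonneg
    intro x hx
    obtain ⟨r, _, rfl⟩ := Multiset.mem_map.mp hx
    exact norm_nonneg _
  rw [habs 1, habs 0]
  have h0 : (p.roots.map (fun a => ‖(0:ℂ) - a‖)).prod
      = (p.roots.map (fun a => ‖a‖)).prod := by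
    congr 1
    apply Multiset.map_congr rfl
    intro r _
    simp
  rw [h0]
  have hlc : (0:ℝ) ≤ ‖p.leadingCoeff‖ := norm_nonneg _
  calc ‖p.leadingCoeff‖ * (p.roots.map (fun a => ‖1 - a‖)).prod
      ≤ ‖p.leadingCoeff‖ * ((3/2) ^ Multiset.card p.roots * (p.roots.map (fun a => ‖a‖)).prod) :=
        mul_le_mul_of_nonneg_left hmain hlc
    _ ≤ ‖p.leadingCoeff‖ * ((3/2) ^ D * (p.roots.map (fun a => ‖a‖)).prod) := by
        apply mul_le_mul_of_nonneg_left _ hlc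
        exact mul_le_mul_of_nonneg_right hpow hQ
    _ = (3/2) ^ D * (‖p.leadingCoeff‖ * (p.roots.map (fun a => ‖a‖)).prod) := by ring





/-- A polynomial `f ∈ ℂ[z₁,…,zₙ]` is stable if it does not vanish whenever all
variables have positive imaginary part. -/
def MvStable {n : ℕ} (f : MvPolynomial (Fin n) ℂ) : Prop :=
  ∀ z : Fin n → ℂ, (∀ j, 0 < (z j).im) → MvPolynomial.eval z f ≠ 0

theorem stmt7 (n : ℕ) (f : MvPolynomial (Fin n) ℂ) (hf : MvStable f) (j : Fin n)
    (α : ℂ) (hα : 0 ≤ α.im) :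
    let g : MvPolynomial (Fin n) ℂ :=
      MvPolynomial.aeval (fun i => if i = j then MvPolynomial.C α else MvPolynomial.X i) f
    g = 0 ∨ MvStable g := by
  intro g
  have hgdef : g = MvPolynomial.aeval
      (fun i => if i = j then MvPolynomial.C α else MvPolynomial.X i) f := rfl
  by_cases hg0 : g = 0
  · exact Or.inl hg0
  right
  intro z0 hz0 hz0g
  -- evaluation of g in terms of f
  have hgeval : ∀ v : Fin n → ℂ, MvPolynomial.eval v g
      = MvPolynomial.eval (fun i => if i = j then α else v i) f := by
    intro v
    rw [hgdef, ← stmt7_mvaeval_eq_eval v, stmt7_plumb (MvPolynomial.aeval v) _ f]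
    exact congrArg (fun t => MvPolynomial.eval t f)
      (funext fun i => by by_cases hij : i = j <;> simp [hij])
  -- a point where g does not vanish
  obtain ⟨w, hw⟩ : ∃ w, MvPolynomial.eval w g ≠ 0 := by
    by_contra h
    push_neg at h
    exact hg0 (MvPolynomial.funext (fun x => by simp [h x]))
  set d : Fin n → ℂ := fun i => w i - z0 i with hd
  -- the line polynomial
  set φp : Polynomial ℂ := MvPolynomial.aeval
    (fun i => Polynomial.C (z0 i) + Polynomial.X * Polynomial.C (d i)) g with hφp
  have hφeval : ∀ s : ℂ, φp.eval s = MvPolynomial.eval (fun i => z0 i + s * d i) g := by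
    intro s
    rw [hφp, ← Polynomial.coe_aeval_eq_eval s, stmt7_plumb (Polynomial.aeval s) _ g]
    exact congrArg (fun t => MvPolynomial.eval t g)
      (funext fun i => by
        simp only [map_add, map_mul, Polynomial.aeval_C, Polynomial.aeval_X,
          Algebra.algebraMap_self, RingHom.id_apply])
  have hφ1 : φp.eval 1 = MvPolynomial.eval w g := by
    rw [hφeval]
    exact congrArg (fun t => MvPolynomial.eval t g)
      (funext fun i => by
        simp only [map_add, map_mul, Polynomial.aeval_C, Polynomial.aeval_X,
          Algebra.algebraMap_self, RingHom.id_apply, one_mul, hd]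
        ring)
  have hφ0 : φp ≠ 0 := by
    intro h
    apply hw
    rw [← hφ1, h, Polynomial.eval_zero]
  -- choose a small parameter
  have hjmem : j ∈ Finset.univ := Finset.mem_univ j
  set δ : ℝ := Finset.univ.inf' ⟨j, hjmem⟩
      (fun i => (z0 i).im / (2 * (‖d i‖ + 1))) with hδ
  have hδpos : 0 < δ := by
    rw [hδ]; refine (Finset.lt_inf'_iff _).2 ?_
    intro i _
    have h1 := hz0 i
    have h2 := norm_nonneg (d i)
    have h3 : 0 < 2 * (‖d i‖ + 1) := by linarith
    exact div_pos h1 h3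
  obtain ⟨s₀, hs₀mem, hs₀root⟩ : ∃ s₀ : ℝ, s₀ ∈ Set.Ioo (0:ℝ) δ ∧ φp.eval (s₀:ℂ) ≠ 0 := by
    by_contra h
    push_neg at h
    have hsub : ((↑) '' Set.Ioo (0:ℝ) δ : Set ℂ) ⊆ {x | φp.IsRoot x} := by
      rintro x ⟨s, hs, rfl⟩
      exact h s hs
    have hinf : ((↑) '' Set.Ioo (0:ℝ) δ : Set ℂ).Infinite :=
      (Set.Ioo_infinite hδpos).image (Complex.ofReal_injective.injOn)
    exact (hinf.mono hsub) (Polynomial.finite_setOf_isRoot hφ0)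
  set u : Fin n → ℂ := fun i => (s₀ : ℂ) * d i with hu
  set z1 : Fin n → ℂ := fun i => z0 i + u i with hz1
  have hz1g : MvPolynomial.eval z1 g ≠ 0 := by
    rw [hz1]
    simpa [hφeval] using hs₀root
  have hub : ∀ i, 2 * ‖u i‖ < (z0 i).im := by
    intro i
    have h4 := norm_nonneg (d i)
    have hpos : (0:ℝ) < 2 * (‖d i‖ + 1) := by linarith
    have h1 : δ ≤ (z0 i).im / (2 * (‖d i‖ + 1)) :=
      Finset.inf'_le _ (Finset.mem_univ i)
    have h2 : δ * (2 * (‖d i‖ + 1)) ≤ (z0 i).im := by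
      rw [← le_div_iff₀ hpos]
      exact h1
    have h3 : ‖u i‖ = s₀ * ‖d i‖ := by
      rw [hu]
      simp [norm_mul, Complex.norm_real, abs_of_pos hs₀mem.1]
    have h5 := hs₀mem.1
    have h6 := hs₀mem.2
    rw [h3]
    nlinarith [mul_lt_mul_of_pos_right h6 hpos]
  -- the core non-vanishing statement from stability
  have hcore : ∀ (y : ℝ), 0 < y → ∀ s : ℂ, ‖s‖ < 2 →
      MvPolynomial.eval (fun i => if i = j then α + (y:ℂ) * Complex.I else z0 i + s * u i) f ≠ 0 := by
    intro y hy s hs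
    apply hf
    intro i
    by_cases hij : i = j
    · simp only [hij, if_true]
      have him : (α + (y:ℂ) * Complex.I).im = α.im + y := by simp
      rw [him]
      linarith
    · simp only [if_neg hij]
      have h2 : ‖s * u i‖ ≤ 2 * ‖u i‖ := by
        rw [norm_mul]
        have h0 := norm_nonneg (u i)
        nlinarith [norm_nonneg s]
      have h3 := hub i
      have him : (z0 i + s * u i).im = (z0 i).im + (s * u i).im := by simp
      rw [him]
      have h4 := Complex.abs_im_le_norm (s * u i)
      have h5 := neg_abs_le ((s * u i).im)
      linarith
  -- the double polynomial giving the uniform degree bound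
  set Q : Polynomial (Polynomial ℂ) := MvPolynomial.aeval
      (fun i => if i = j then Polynomial.C Polynomial.X
        else Polynomial.C (Polynomial.C (z0 i)) + Polynomial.X * Polynomial.C (Polynomial.C (u i))) f
    with hQdef
  set D : ℕ := Q.natDegree with hD
  -- the one-variable polynomials for the limit
  set r1 : Polynomial ℂ := MvPolynomial.aeval
      (fun i => if i = j then Polynomial.X else Polynomial.C (z1 i)) f with hr1
  set r0 : Polynomial ℂ := MvPolynomial.aeval
      (fun i => if i = j then Polynomial.X else Polynomial.C (z0 i)) f with hr0
  have hr1eval : ∀ c : ℂ, r1.eval c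
      = MvPolynomial.eval (fun i => if i = j then c else z1 i) f := by
    intro c
    rw [hr1, ← Polynomial.coe_aeval_eq_eval c, stmt7_plumb (Polynomial.aeval c) _ f]
    exact congrArg (fun t => MvPolynomial.eval t f)
      (funext fun i => by by_cases hij : i = j <;> simp [hij])
  have hr0eval : ∀ c : ℂ, r0.eval c
      = MvPolynomial.eval (fun i => if i = j then c else z0 i) f := by
    intro c
    rw [hr0, ← Polynomial.coe_aeval_eq_eval c, stmt7_plumb (Polynomial.aeval c) _ f]
    exact congrArg (fun t => MvPolynomial.eval t f)
      (funext fun i => by by_cases hij : i = j <;> simp [hij])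
  -- the key inequality for each y > 0
  have hkey : ∀ y : ℝ, y ∈ Set.Ioi (0:ℝ) →
      ‖r1.eval (α + (y:ℂ) * Complex.I)‖
        ≤ (3/2) ^ D * ‖r0.eval (α + (y:ℂ) * Complex.I)‖ := by
    intro y hy
    rw [Set.mem_Ioi] at hy
    set c₀ : ℂ := α + (y:ℂ) * Complex.I with hc₀
    set Ψ : Polynomial (Polynomial ℂ) →ₐ[ℂ] Polynomial ℂ :=
      Polynomial.mapAlgHom (Polynomial.aeval c₀) with hΨ
    set q : Polynomial ℂ := Ψ Q with hq
    have hqmap : q = Q.map (Polynomial.aeval c₀ : Polynomial ℂ →ₐ[ℂ] ℂ) := by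
      rw [hq, hΨ, ← Polynomial.coe_mapAlgHom]
    have hqdeg : q.natDegree ≤ D := by
      rw [hqmap]
      exact Polynomial.natDegree_map_le
    have hqeval : ∀ s : ℂ, q.eval s
        = MvPolynomial.eval (fun i => if i = j then c₀ else z0 i + s * u i) f := by
      intro s
      rw [hq, hΨ, hQdef, ← Polynomial.coe_aeval_eq_eval s,
        ← AlgHom.comp_apply,
        stmt7_plumb ((Polynomial.aeval s).comp (Polynomial.mapAlgHom (Polynomial.aeval c₀))) _ f]
      refine congrArg (fun t => MvPolynomial.eval t f) (funext fun i => ?_)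
      by_cases hij : i = j
      · simp only [if_pos hij, AlgHom.comp_apply, Polynomial.coe_mapAlgHom,
          Polynomial.map_C, Polynomial.aeval_X, Polynomial.aeval_C,
          Algebra.algebraMap_self, RingHom.id_apply]
        simp
      · simp only [if_neg hij, AlgHom.comp_apply, Polynomial.coe_mapAlgHom,
          Polynomial.map_add, Polynomial.map_mul, Polynomial.map_C, Polynomial.map_X,
          map_add, map_mul, Polynomial.aeval_C, Polynomial.aeval_X,
          Algebra.algebraMap_self, RingHom.id_apply]
        simp
    have hroots : ∀ r : ℂ, q.IsRoot r → 2 ≤ ‖r‖ := by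
      intro r hr
      by_contra hlt
      push_neg at hlt
      exact hcore y hy r hlt (by rw [← hqeval r]; exact hr)
    have hineq := stmt7_key D q hqdeg hroots
    rw [hqeval 1, hqeval 0] at hineq
    have e1 : (fun i => if i = j then c₀ else z0 i + 1 * u i)
        = fun i => if i = j then c₀ else z1 i := by
      funext i
      by_cases hij : i = j
      · simp [hij]
      · simp only [if_neg hij, one_mul, hz1]
    have e0 : (fun i => if i = j then c₀ else z0 i + 0 * u i)
        = fun i => if i = j then c₀ else z0 i := by
      funext i
      by_cases hij : i = j <;> simp [hij]
    rw [e1, e0] at hineq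
    rw [hr1eval, hr0eval]
    exact hineq
  -- pass to the limit y → 0⁺
  have hcont1 : Continuous fun y : ℝ => ‖r1.eval (α + (y:ℂ) * Complex.I)‖ := by
    apply continuous_norm.comp
    exact r1.continuous.comp (continuous_const.add (Complex.continuous_ofReal.mul continuous_const))
  have hcont0 : Continuous fun y : ℝ =>
      (3/2:ℝ) ^ D * ‖r0.eval (α + (y:ℂ) * Complex.I)‖ := by
    apply Continuous.mul continuous_const
    apply continuous_norm.comp
    exact r0.continuous.comp (continuous_const.add (Complex.continuous_ofReal.mul continuous_const))
  have ht1 : Filter.Tendsto (fun y : ℝ => ‖r1.eval (α + (y:ℂ) * Complex.I)‖)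
      (nhdsWithin 0 (Set.Ioi 0)) (nhds (‖r1.eval (α + ((0:ℝ):ℂ) * Complex.I)‖)) :=
    (hcont1.tendsto 0).mono_left nhdsWithin_le_nhds
  have ht0 : Filter.Tendsto (fun y : ℝ =>
      (3/2:ℝ) ^ D * ‖r0.eval (α + (y:ℂ) * Complex.I)‖)
      (nhdsWithin 0 (Set.Ioi 0))
      (nhds ((3/2:ℝ) ^ D * ‖r0.eval (α + ((0:ℝ):ℂ) * Complex.I)‖)) :=
    (hcont0.tendsto 0).mono_left nhdsWithin_le_nhds
  have hle : ‖r1.eval (α + ((0:ℝ):ℂ) * Complex.I)‖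
      ≤ (3/2:ℝ) ^ D * ‖r0.eval (α + ((0:ℝ):ℂ) * Complex.I)‖ := by
    refine le_of_tendsto_of_tendsto ht1 ht0 ?_
    filter_upwards [eventually_mem_nhdsWithin] with y hy
    exact hkey y hy
  have hα0 : α + ((0:ℝ):ℂ) * Complex.I = α := by simp
  rw [hα0] at hle
  have hv1 : r1.eval α = MvPolynomial.eval z1 g := by
    rw [hr1eval, hgeval z1]
  have hv0 : r0.eval α = MvPolynomial.eval z0 g := by
    rw [hr0eval, hgeval z0]
  rw [hv1, hv0, hz0g] at hle
  simp only [norm_zero, mul_zero] at hle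
  have : ‖MvPolynomial.eval z1 g‖ > 0 := by
    simpa [norm_pos_iff] using hz1g
  linarith
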